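/- Fix p ∈ (0,1). There exists a constant c > 0, depending only on p, with the following property. Let G = (V, E) be a finite simple graph with |V| = n ≥ 2 vertices and maximum degree at most Δ, where Δ ≥ 2, and let T ≥ 1 be an integer. Let (Y_{v,i})_{v ∈ V, 1 ≤ i ≤ T} be mutually independent random variables where each Y_{v,i} is the maximum of at most Δ mutually independent geometric random variables, each with success probability at least p. For each v ∈ V let Z_v be the maximum, over all blaming chains (v_T, …, v_1) of length T ending at v, of Σ_{i=1}^T Y_{v_i, i}. Then for every real k ≥ 0, Pr[there exists v ∈ V with Z_v ≥ c·(T·ln Δ + ln n + k)] ≤ exp(−k). -/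

import Mathlib

open MeasureTheory ProbabilityTheory
open scoped Classical

/-- `w` is in the closed 2-hop neighborhood Γ²(v) of `v`:
there is a walk from `v` to `w` of length at most 2 (i.e. dist(v,w) ≤ 2). -/
def InTwoHop {V : Type*} (G : SimpleGraph V) (v w : V) : Prop :=
  ∃ pth : G.Walk v w, pth.length ≤ 2

/-- A blaming chain of length `x` ending at `v`: a sequence (v_x, …, v_1) with
v_x = v and v_i ∈ Γ²(v_{i+1}).  Here `f j` encodes v_{j+1}. -/
def IsBlamingChain {V : Type*} (G : SimpleGraph V) (x : ℕ) (v : V) (f : Fin x → V) : Prop :=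
  (∀ h : 0 < x, f ⟨x - 1, Nat.sub_lt h Nat.one_pos⟩ = v) ∧
  (∀ (j : ℕ) (h : j + 1 < x), InTwoHop G (f ⟨j + 1, h⟩) (f ⟨j, Nat.lt_of_succ_lt h⟩))



lemma exists_le_sum : ∀ {T : ℕ} (y : Fin T → ℕ) (m : ℕ), m ≤ ∑ i, y i →
    ∃ t : Fin T → ℕ, (∀ i, t i ≤ y i) ∧ ∑ i, t i = m := by
  intro T
  induction T with
  | zero =>
    intro y m hm
    simp only [Finset.univ_eq_empty, Finset.sum_empty, Nat.le_zero] at hm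
    exact ⟨fun _ => 0, fun i => i.elim0, by simp [hm]⟩
  | succ T ih =>
    intro y m hm
    rw [Fin.sum_univ_succ] at hm
    have hrest : m - min m (y 0) ≤ ∑ i, (y ∘ Fin.succ) i := by
      simp only [Function.comp_apply]
      omega
    obtain ⟨t, ht, hts⟩ := ih (y ∘ Fin.succ) (m - min m (y 0)) hrest
    refine ⟨Fin.cons (min m (y 0)) t, ?_, ?_⟩
    · intro i
      refine Fin.cases ?_ ?_ i
      · simp
      · intro j; simpa using ht j
    · rw [Fin.sum_univ_succ]
      simp only [Fin.cons_zero, Fin.cons_succ]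
      omega

lemma card_compositions_le (T m : ℕ) :
    ((Finset.univ.filter (fun t : Fin T → Fin (m+1) => ∑ i, (t i : ℕ) = m)).card : ℝ)
      ≤ 2 ^ (T + m) := by
  have key : ((Finset.univ.filter (fun t : Fin T → Fin (m+1) => ∑ i, (t i : ℕ) = m)).card : ℝ)
      * (1/2) ^ m ≤ 2 ^ T := by
    have h1 : ((Finset.univ.filter (fun t : Fin T → Fin (m+1) => ∑ i, (t i : ℕ) = m)).card : ℝ)
        * (1/2) ^ m = ∑ t ∈ Finset.univ.filter
          (fun t : Fin T → Fin (m+1) => ∑ i, (t i : ℕ) = m), ∏ i, ((1:ℝ)/2) ^ (t i : ℕ) := by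
      rw [Finset.sum_congr rfl (fun t htt => ?_), Finset.sum_const, nsmul_eq_mul]
      rw [Finset.prod_pow_eq_pow_sum]
      rw [Finset.mem_filter] at htt
      rw [htt.2]
    rw [h1]
    have h2 : ∑ t ∈ Finset.univ.filter
          (fun t : Fin T → Fin (m+1) => ∑ i, (t i : ℕ) = m), ∏ i, ((1:ℝ)/2) ^ (t i : ℕ)
        ≤ ∑ t : Fin T → Fin (m+1), ∏ i, ((1:ℝ)/2) ^ (t i : ℕ) := by
      apply Finset.sum_le_sum_of_subset_of_nonneg (Finset.filter_subset _ _)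
      intro t _ _; positivity
    refine h2.trans ?_
    have h3 : ∑ t : Fin T → Fin (m+1), ∏ i, ((1:ℝ)/2) ^ (t i : ℕ)
        = ∏ _i : Fin T, ∑ j : Fin (m+1), ((1:ℝ)/2) ^ (j : ℕ) := by
      rw [Finset.prod_univ_sum]
      rw [Fintype.piFinset_univ]
    rw [h3]
    have h4 : ∑ j : Fin (m+1), ((1:ℝ)/2) ^ (j : ℕ) ≤ 2 := by
      rw [Fin.sum_univ_eq_sum_range]
      have hs : Summable (fun j : ℕ => ((1:ℝ)/2) ^ j) :=
        summable_geometric_of_lt_one (by norm_num) (by norm_num)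
      have := Summable.sum_le_tsum (Finset.range (m+1)) (fun j _ => by positivity) hs
      rw [tsum_geometric_of_lt_one (by norm_num) (by norm_num)] at this
      linarith
    calc ∏ _i : Fin T, ∑ j : Fin (m+1), ((1:ℝ)/2) ^ (j : ℕ)
        ≤ ∏ _i : Fin T, (2:ℝ) := Finset.prod_le_prod (fun _ _ => by positivity) (fun i _ => h4)
      _ = 2 ^ T := by simp
  have h5 : ((1:ℝ)/2) ^ m = ((2:ℝ) ^ m)⁻¹ := by rw [one_div, inv_pow]
  rw [h5, mul_inv_le_iff₀ (by positivity)] at key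
  calc ((Finset.univ.filter (fun t : Fin T → Fin (m+1) => ∑ i, (t i : ℕ) = m)).card : ℝ)
      ≤ 2 ^ T * 2 ^ m := by
        refine key.trans (le_of_eq ?_)
        ring
    _ = 2 ^ (T + m) := (pow_add 2 T m).symm


lemma geo_tail {Ω : Type} [MeasureSpace Ω] [IsProbabilityMeasure (ℙ : Measure Ω)]
    (Geo : Ω → ℕ) (hmeas : Measurable Geo) (q : ℝ) (hq0 : 0 < q) (hq1 : q < 1)
    (hpmf : ∀ s : ℕ, (ℙ {ω | Geo ω = s}).toReal = q * (1 - q) ^ s) (t : ℕ) :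
    (ℙ {ω | t ≤ Geo ω}).toReal ≤ (1 - q) ^ t := by
  have hset : {ω | t ≤ Geo ω} = ⋃ s : ℕ, {ω | Geo ω = t + s} := by
    ext ω
    simp only [Set.mem_setOf_eq, Set.mem_iUnion]
    constructor
    · intro h; exact ⟨Geo ω - t, by omega⟩
    · rintro ⟨s, hs⟩; omega
  have hdisj : Pairwise (Function.onFun Disjoint (fun s : ℕ => {ω | Geo ω = t + s})) := by
    intro a b hab
    simp only [Function.onFun, Set.disjoint_left, Set.mem_setOf_eq]
    intro ω h1 h2; omega
  have hmeas' : ∀ s : ℕ, MeasurableSet {ω | Geo ω = t + s} := by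
    intro s
    exact hmeas (MeasurableSet.singleton (t+s))
  rw [hset, measure_iUnion hdisj hmeas']
  rw [ENNReal.tsum_toReal_eq (fun s => measure_ne_top _ _)]
  have : ∀ s : ℕ, (ℙ {ω | Geo ω = t + s}).toReal = (q * (1-q)^t) * (1-q)^s := by
    intro s
    rw [hpmf (t+s), pow_add]; ring
  rw [tsum_congr this, tsum_mul_left, tsum_geometric_of_lt_one (by linarith) (by linarith)]
  have : (1 : ℝ) - (1 - q) = q := by ring
  rw [this]
  rw [mul_comm q, mul_assoc]
  rw [mul_inv_cancel₀ (ne_of_gt hq0), mul_one]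

lemma y_tail {Ω : Type} [MeasureSpace Ω] [IsProbabilityMeasure (ℙ : Measure Ω)]
    {p : ℝ} (hp0 : 0 < p) (hp1 : p < 1) (Δ : ℕ) (hΔ : 1 ≤ Δ)
    (Y : Ω → ℕ)
    (hY : ∃ (m : ℕ) (_ : 1 ≤ m) (_ : m ≤ Δ) (Geo : Fin m → Ω → ℕ) (q : Fin m → ℝ),
      (∀ j, Measurable (Geo j)) ∧
      (∀ j, p ≤ q j ∧ q j < 1) ∧
      iIndepFun Geo ℙ ∧
      (∀ j (s : ℕ), (ℙ {ω | Geo j ω = s}).toReal = q j * (1 - q j) ^ s) ∧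
      (∀ ω, Y ω = Finset.univ.sup (fun j => Geo j ω)))
    (t : ℕ) :
    (ℙ {ω | t ≤ Y ω}).toReal ≤ Δ * (1 - p) ^ t := by
  obtain ⟨m, hm1, hmΔ, Geo, q, hGmeas, hq, _, hpmf, hsup⟩ := hY
  rcases Nat.eq_zero_or_pos t with ht | ht
  · subst ht
    simp only [pow_zero, mul_one]
    calc (ℙ {ω | 0 ≤ Y ω}).toReal ≤ 1 := by
          exact ENNReal.toReal_le_of_le_ofReal one_pos.le (by simpa using prob_le_one)
      _ ≤ (Δ : ℝ) := by exact_mod_cast hΔ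
  · have hsub : {ω | t ≤ Y ω} ⊆ ⋃ j ∈ (Finset.univ : Finset (Fin m)), {ω | t ≤ Geo j ω} := by
      intro ω hω
      simp only [Set.mem_setOf_eq] at hω
      rw [hsup ω] at hω
      rw [Finset.le_sup_iff (by exact ht)] at hω
      obtain ⟨j, _, hj⟩ := hω
      simp only [Set.mem_iUnion]
      exact ⟨j, Finset.mem_univ j, hj⟩
    have h1 : ℙ {ω | t ≤ Y ω} ≤ ∑ j : Fin m, ℙ {ω | t ≤ Geo j ω} :=
      (measure_mono hsub).trans (measure_biUnion_finset_le _ _)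
    have h2 : (ℙ {ω | t ≤ Y ω}).toReal ≤ ∑ j : Fin m, (ℙ {ω | t ≤ Geo j ω}).toReal := by
      rw [← ENNReal.toReal_sum (fun j _ => measure_ne_top _ _)]
      exact ENNReal.toReal_mono (by
        exact (ENNReal.sum_lt_top.mpr (fun j _ => measure_lt_top _ _)).ne) h1
    refine h2.trans ?_
    calc ∑ j : Fin m, (ℙ {ω | t ≤ Geo j ω}).toReal
        ≤ ∑ _j : Fin m, (1 - p) ^ t := by
          refine Finset.sum_le_sum (fun j _ => ?_)
          refine (geo_tail (Geo j) (hGmeas j) (q j) (lt_of_lt_of_le hp0 (hq j).1)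
            (hq j).2 (hpmf j) t).trans ?_
          exact pow_le_pow_left₀ (by linarith [(hq j).2]) (by linarith [(hq j).1]) t
      _ = m * (1 - p) ^ t := by simp [Finset.sum_const]
      _ ≤ Δ * (1 - p) ^ t := by
          have : (m : ℝ) ≤ Δ := by exact_mod_cast hmΔ
          nlinarith [pow_nonneg (by linarith : (0:ℝ) ≤ 1 - p) t]

lemma chain_tail {V : Type} [Fintype V] {Ω : Type} [MeasureSpace Ω]
    [IsProbabilityMeasure (ℙ : Measure Ω)]
    {p : ℝ} (hp0 : 0 < p) (hp1 : p < 1) (Δ : ℕ) (hΔ : 1 ≤ Δ)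
    {T : ℕ} (hT : 0 < T) (Y : V → Fin T → Ω → ℕ)
    (hind : iIndepFun (fun vi : V × Fin T => Y vi.1 vi.2) ℙ)
    (hY : ∀ (v : V) (i : Fin T), ∃ (m : ℕ) (_ : 1 ≤ m) (_ : m ≤ Δ)
        (Geo : Fin m → Ω → ℕ) (q : Fin m → ℝ),
      (∀ j, Measurable (Geo j)) ∧
      (∀ j, p ≤ q j ∧ q j < 1) ∧
      iIndepFun Geo ℙ ∧
      (∀ j (s : ℕ), (ℙ {ω | Geo j ω = s}).toReal = q j * (1 - q j) ^ s) ∧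
      (∀ ω, Y v i ω = Finset.univ.sup (fun j => Geo j ω)))
    (D : ℕ) (hD : 0 < D) (hD4 : (1-p)^D ≤ 1/4)
    (f : Fin T → V) (M : ℕ) :
    (ℙ {ω | M ≤ ∑ i, Y (f i) i ω}).toReal ≤ (2*Δ:ℝ)^T * (1/2)^(M/D - T) := by
  set m : ℕ := M/D - T with hm
  set CS : Finset (Fin T → Fin (m+1)) :=
    Finset.univ.filter (fun t : Fin T → Fin (m+1) => ∑ i, (t i : ℕ) = m) with hCS
  -- covering
  have hcover : {ω | M ≤ ∑ i, Y (f i) i ω} ⊆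
      ⋃ te ∈ CS, ⋂ i : Fin T, {ω | D * (te i : ℕ) ≤ Y (f i) i ω} := by
    intro ω hω
    simp only [Set.mem_setOf_eq] at hω
    set y : Fin T → ℕ := fun i => Y (f i) i ω / D with hy
    have hsum : m ≤ ∑ i, y i := by
      have h1 : ∀ i, Y (f i) i ω ≤ D * y i + (D - 1) := by
        intro i
        have := Nat.div_add_mod (Y (f i) i ω) D
        have := Nat.mod_lt (Y (f i) i ω) hD
        simp only [hy]
        omega
      have h2 : M ≤ D * (∑ i, y i) + T * (D - 1) := by
        calc M ≤ ∑ i, Y (f i) i ω := hω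
          _ ≤ ∑ i, (D * y i + (D - 1)) := Finset.sum_le_sum (fun i _ => h1 i)
          _ = D * (∑ i, y i) + T * (D - 1) := by
              rw [Finset.sum_add_distrib, Finset.mul_sum]
              simp [Finset.sum_const, mul_comm]
      have hTD : T * (D - 1) + T = T * D := by
        have hD1 : D - 1 + 1 = D := Nat.succ_pred_eq_of_pos hD
        calc T * (D - 1) + T = T * ((D - 1) + 1) := by ring
          _ = T * D := by rw [hD1]
      have h3 : M < (∑ i, y i + T) * D := by
        calc M ≤ D * (∑ i, y i) + T * (D - 1) := h2
          _ < D * (∑ i, y i) + (T * (D - 1) + T) := by omega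
          _ = (∑ i, y i + T) * D := by rw [hTD]; ring
      have h4 : M / D < ∑ i, y i + T := (Nat.div_lt_iff_lt_mul hD).mpr h3
      omega
    obtain ⟨t, ht, hts⟩ := exists_le_sum y m hsum
    have htle : ∀ i, t i ≤ m := by
      intro i
      rw [← hts]
      exact Finset.single_le_sum (fun j _ => Nat.zero_le _) (Finset.mem_univ i)
    set te : Fin T → Fin (m+1) := fun i => ⟨t i, Nat.lt_succ_of_le (htle i)⟩ with hte
    have hteCS : te ∈ CS := by
      rw [hCS, Finset.mem_filter]
      exact ⟨Finset.mem_univ _, by simp [hte, hts]⟩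
    refine Set.mem_biUnion hteCS ?_
    simp only [Set.mem_iInter, Set.mem_setOf_eq]
    intro i
    have : t i * D ≤ Y (f i) i ω := (Nat.le_div_iff_mul_le hD).mp (ht i)
    simpa [hte, mul_comm] using this
  -- per-composition product bound
  have hprod : ∀ te : Fin T → Fin (m+1),
      (ℙ (⋂ i : Fin T, {ω | D * (te i : ℕ) ≤ Y (f i) i ω})).toReal ≤
        ∏ i : Fin T, ((Δ : ℝ) * (1-p) ^ (D * (te i : ℕ))) := by
    intro te
    have hinj : Function.Injective (fun i : Fin T => ((f i, i) : V × Fin T)) := by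
      intro a b h
      simpa using congrArg Prod.snd h
    set emb : Fin T ↪ V × Fin T := ⟨fun i => (f i, i), hinj⟩ with hemb
    set S : Finset (V × Fin T) := Finset.univ.map emb with hS
    set sets : V × Fin T → Set ℕ := fun vi => {n | D * (te vi.2 : ℕ) ≤ n} with hsets
    have hiff := (iIndepFun_iff_measure_inter_preimage_eq_mul.mp hind) S
      (sets := sets) (fun vi _ => trivial)
    have hIeq : (⋂ vi ∈ S, (fun vi : V × Fin T => Y vi.1 vi.2) vi ⁻¹' sets vi)
        = ⋂ i : Fin T, {ω | D * (te i : ℕ) ≤ Y (f i) i ω} := by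
      ext ω
      simp [hS, hemb, hsets, Finset.mem_map, Set.mem_iInter]
    rw [hIeq] at hiff
    rw [hiff]
    rw [hS, Finset.prod_map, ENNReal.toReal_prod]
    refine Finset.prod_le_prod (fun i _ => ENNReal.toReal_nonneg) (fun i _ => ?_)
    have := y_tail hp0 hp1 Δ hΔ (Y (f i) i) (hY (f i) i) (D * (te i : ℕ))
    simpa [hemb, hsets, Set.preimage] using this
  -- union bound
  have hub : (ℙ {ω | M ≤ ∑ i, Y (f i) i ω}).toReal ≤
      ∑ te ∈ CS, (ℙ (⋂ i : Fin T, {ω | D * (te i : ℕ) ≤ Y (f i) i ω})).toReal := by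
    rw [← ENNReal.toReal_sum (fun te _ => measure_ne_top _ _)]
    refine ENNReal.toReal_mono
      ((ENNReal.sum_lt_top.mpr (fun te _ => measure_lt_top _ _)).ne) ?_
    exact (measure_mono hcover).trans (measure_biUnion_finset_le _ _)
  refine hub.trans ?_
  have hterm : ∀ te ∈ CS,
      (ℙ (⋂ i : Fin T, {ω | D * (te i : ℕ) ≤ Y (f i) i ω})).toReal ≤
        (Δ:ℝ)^T * (1/4)^m := by
    intro te hteCS
    refine (hprod te).trans ?_
    rw [hCS, Finset.mem_filter] at hteCS
    have hexp : ∏ i : Fin T, ((Δ : ℝ) * (1-p) ^ (D * (te i : ℕ)))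
        = (Δ:ℝ)^T * ((1-p)^D)^m := by
      rw [Finset.prod_mul_distrib, Finset.prod_const, Finset.prod_pow_eq_pow_sum]
      congr 1
      · simp
      · rw [← Finset.mul_sum, hteCS.2, pow_mul]
    rw [hexp]
    have h1p : (0:ℝ) ≤ 1 - p := by linarith
    have hle : ((1-p)^D)^m ≤ ((1:ℝ)/4)^m := pow_le_pow_left₀ (by positivity) hD4 m
    exact mul_le_mul_of_nonneg_left hle (by positivity)
  calc ∑ te ∈ CS, (ℙ (⋂ i : Fin T, {ω | D * (te i : ℕ) ≤ Y (f i) i ω})).toReal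
      ≤ ∑ _te ∈ CS, (Δ:ℝ)^T * (1/4)^m := Finset.sum_le_sum hterm
    _ = (CS.card : ℝ) * ((Δ:ℝ)^T * (1/4)^m) := by rw [Finset.sum_const, nsmul_eq_mul]
    _ ≤ 2^(T+m) * ((Δ:ℝ)^T * (1/4)^m) := by
        refine mul_le_mul_of_nonneg_right (card_compositions_le T m) (by positivity)
    _ = (2*Δ:ℝ)^T * (1/2)^m := by
        have h24 : (2:ℝ)^m * (1/4)^m = (1/2)^m := by rw [← mul_pow]; norm_num
        rw [pow_add, mul_pow]
        calc (2:ℝ)^T * 2^m * ((Δ:ℝ)^T * (1/4)^m)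
            = ((2:ℝ)^T * (Δ:ℝ)^T) * ((2:ℝ)^m * (1/4)^m) := by ring
          _ = (2:ℝ)^T * (Δ:ℝ)^T * (1/2)^m := by rw [h24]

lemma twohop_card_le {V : Type} [Fintype V] (G : SimpleGraph V) [DecidableRel G.Adj]
    (Δ : ℕ) (hΔ : 2 ≤ Δ) (hdeg : ∀ v, G.degree v ≤ Δ) (v : V) :
    (Finset.univ.filter (fun w => InTwoHop G v w)).card ≤ 2 * Δ^2 := by
  have hsub : Finset.univ.filter (fun w => InTwoHop G v w) ⊆
      insert v (G.neighborFinset v ∪ (G.neighborFinset v).biUnion (fun u => G.neighborFinset u)) := by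
    intro w hw
    rw [Finset.mem_filter] at hw
    obtain ⟨pth, hlen⟩ := hw.2
    cases pth with
    | nil => exact Finset.mem_insert_self _ _
    | cons h1 q =>
      cases q with
      | nil =>
        refine Finset.mem_insert_of_mem (Finset.mem_union_left _ ?_)
        rwa [SimpleGraph.mem_neighborFinset]
      | cons h2 r =>
        cases r with
        | nil =>
          refine Finset.mem_insert_of_mem (Finset.mem_union_right _ ?_)
          rw [Finset.mem_biUnion]
          exact ⟨_, by rwa [SimpleGraph.mem_neighborFinset], by rwa [SimpleGraph.mem_neighborFinset]⟩
        | cons h3 s => simp [SimpleGraph.Walk.length_cons] at hlen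
  calc (Finset.univ.filter (fun w => InTwoHop G v w)).card
      ≤ (insert v (G.neighborFinset v ∪ (G.neighborFinset v).biUnion
          (fun u => G.neighborFinset u))).card := Finset.card_le_card hsub
    _ ≤ (G.neighborFinset v ∪ (G.neighborFinset v).biUnion (fun u => G.neighborFinset u)).card + 1 :=
        Finset.card_insert_le _ _
    _ ≤ ((G.neighborFinset v).card + ((G.neighborFinset v).biUnion (fun u => G.neighborFinset u)).card) + 1 := by
        have := Finset.card_union_le (G.neighborFinset v)
          ((G.neighborFinset v).biUnion (fun u => G.neighborFinset u))
        omega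
    _ ≤ (Δ + Δ * Δ) + 1 := by
        have h1 : (G.neighborFinset v).card ≤ Δ := by
          rw [SimpleGraph.card_neighborFinset_eq_degree]; exact hdeg v
        have h2 : ((G.neighborFinset v).biUnion (fun u => G.neighborFinset u)).card ≤ Δ * Δ := by
          calc ((G.neighborFinset v).biUnion (fun u => G.neighborFinset u)).card
              ≤ ∑ u ∈ G.neighborFinset v, (G.neighborFinset u).card := Finset.card_biUnion_le
            _ ≤ ∑ _u ∈ G.neighborFinset v, Δ := Finset.sum_le_sum (fun u _ => by
                rw [SimpleGraph.card_neighborFinset_eq_degree]; exact hdeg u)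
            _ = (G.neighborFinset v).card * Δ := by rw [Finset.sum_const, smul_eq_mul]
            _ ≤ Δ * Δ := Nat.mul_le_mul_right Δ h1
        omega
    _ ≤ 2 * Δ^2 := by nlinarith

lemma chain_count {V : Type} [Fintype V] (G : SimpleGraph V) [DecidableRel G.Adj]
    (Δ : ℕ) (hΔ : 2 ≤ Δ) (hdeg : ∀ v, G.degree v ≤ Δ) :
    ∀ T : ℕ, 1 ≤ T → ∀ v : V,
      (Finset.univ.filter (fun f : Fin T → V => IsBlamingChain G T v f)).card ≤ (2*Δ^2)^(T-1) := by
  intro T hT1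
  induction T, hT1 using Nat.le_induction with
  | base =>
    intro v
    have hsub : Finset.univ.filter (fun f : Fin 1 → V => IsBlamingChain G 1 v f) ⊆
        {fun _ => v} := by
      intro f hf
      rw [Finset.mem_filter] at hf
      rw [Finset.mem_singleton]
      funext i
      have h0 : i = ⟨0, Nat.one_pos⟩ := Subsingleton.elim _ _
      rw [h0]
      exact hf.2.1 Nat.one_pos
    calc _ ≤ ({fun _ => v} : Finset (Fin 1 → V)).card := Finset.card_le_card hsub
      _ = 1 := Finset.card_singleton _
      _ ≤ (2*Δ^2)^(1-1) := by norm_num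
  | succ T hT ih =>
    intro v
    set N2 : Finset V := Finset.univ.filter (fun w => InTwoHop G v w) with hN2
    set Φ : (Fin (T+1) → V) → (Fin T → V) := fun f => f ∘ Fin.castSucc with hΦ
    have hmaps : ∀ f ∈ Finset.univ.filter (fun f : Fin (T+1) → V => IsBlamingChain G (T+1) v f),
        Φ f ∈ N2.biUnion (fun w => Finset.univ.filter
          (fun g : Fin T → V => IsBlamingChain G T w g)) := by
      intro f hf
      rw [Finset.mem_filter] at hf
      obtain ⟨-, h1, h2⟩ := hf
      have hend : f ⟨T, Nat.lt_succ_self T⟩ = v := by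
        have := h1 (Nat.succ_pos T)
        convert this using 2; simp
      set w : V := f ⟨T-1, by omega⟩ with hw
      have hvw : InTwoHop G v w := by
        have hlt : (T-1) + 1 < T + 1 := by omega
        have := h2 (T-1) hlt
        have heq : (⟨T-1+1, hlt⟩ : Fin (T+1)) = ⟨T, Nat.lt_succ_self T⟩ := by
          apply Fin.ext; simp; omega
        rw [heq, hend] at this
        exact this
      rw [Finset.mem_biUnion]
      refine ⟨w, by rw [hN2, Finset.mem_filter]; exact ⟨Finset.mem_univ _, hvw⟩, ?_⟩
      rw [Finset.mem_filter]
      refine ⟨Finset.mem_univ _, ?_, ?_⟩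
      · intro h
        show f (Fin.castSucc ⟨T-1, Nat.sub_lt h Nat.one_pos⟩) = w
        rw [hw]
        congr 1
      · intro j hj
        have hlt : j + 1 < T + 1 := by omega
        have := h2 j hlt
        convert this using 2 <;> rfl
    have hinj : Set.InjOn Φ (Finset.univ.filter
        (fun f : Fin (T+1) → V => IsBlamingChain G (T+1) v f)) := by
      intro f hf g hg hfg
      rw [Finset.coe_filter, Set.mem_setOf_eq] at hf hg
      funext i
      rcases Nat.lt_or_ge i.val T with hi | hi
      · have : Φ f ⟨i.val, hi⟩ = Φ g ⟨i.val, hi⟩ := by rw [hfg]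
        simpa [hΦ, Fin.castSucc, Fin.ext_iff] using this
      · have hiT : i = ⟨T, Nat.lt_succ_self T⟩ := by
          apply Fin.ext; simp; omega
        rw [hiT]
        have hf1 := hf.2.1 (Nat.succ_pos T)
        have hg1 := hg.2.1 (Nat.succ_pos T)
        have e1 : f ⟨T, Nat.lt_succ_self T⟩ = v := by convert hf1 using 2; simp
        have e2 : g ⟨T, Nat.lt_succ_self T⟩ = v := by convert hg1 using 2; simp
        rw [e1, e2]
    calc (Finset.univ.filter (fun f : Fin (T+1) → V => IsBlamingChain G (T+1) v f)).card
        ≤ (N2.biUnion (fun w => Finset.univ.filter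
            (fun g : Fin T → V => IsBlamingChain G T w g))).card :=
          Finset.card_le_card_of_injOn Φ hmaps hinj
      _ ≤ ∑ w ∈ N2, (Finset.univ.filter
            (fun g : Fin T → V => IsBlamingChain G T w g)).card := Finset.card_biUnion_le
      _ ≤ ∑ _w ∈ N2, (2*Δ^2)^(T-1) := Finset.sum_le_sum (fun w _ => ih w)
      _ = N2.card * (2*Δ^2)^(T-1) := by rw [Finset.sum_const, smul_eq_mul]
      _ ≤ (2*Δ^2) * (2*Δ^2)^(T-1) :=
          Nat.mul_le_mul_right _ (twohop_card_le G Δ hΔ hdeg v)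
      _ = (2*Δ^2)^(T+1-1) := by
          rw [← pow_succ']
          congr 1
          omega

set_option maxHeartbeats 2000000 in
/-- Fix p ∈ (0,1).  There is c > 0 depending only on p such that for
every graph G on n ≥ 2 vertices with max degree at most Δ (Δ ≥ 2), every T ≥ 1,
and mutually independent random variables Y_{v,i} (v ∈ V, 1 ≤ i ≤ T), each the
maximum of at most Δ independent geometric random variables with success
probability at least p, the following holds.  Letting Z_v be the maximum over
blaming chains of length T ending at v of Σ_{i=1}^T Y_{v_i,i}, for every k ≥ 0,
Pr[∃ v, Z_v ≥ c·(T·ln Δ + ln n + k)] ≤ exp(−k). -/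
theorem blaming_chains_whp_bound (p : ℝ) (hp : p ∈ Set.Ioo (0 : ℝ) 1) :
    ∃ c : ℝ, 0 < c ∧
      ∀ (V : Type) [Fintype V] (G : SimpleGraph V) [DecidableRel G.Adj]
        (Δ : ℕ), 2 ≤ Δ → 2 ≤ Fintype.card V →
        (∀ v : V, G.degree v ≤ Δ) →
        ∀ (T : ℕ), 1 ≤ T →
        ∀ (Ω : Type) [MeasureSpace Ω] [IsProbabilityMeasure (ℙ : Measure Ω)]
          (Y : V → Fin T → Ω → ℕ),
          (∀ v i, Measurable (Y v i)) →
          iIndepFun (fun vi : V × Fin T => Y vi.1 vi.2) ℙ →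
          (∀ (v : V) (i : Fin T), ∃ (m : ℕ) (_ : 1 ≤ m) (_ : m ≤ Δ)
              (Geo : Fin m → Ω → ℕ) (q : Fin m → ℝ),
            (∀ j, Measurable (Geo j)) ∧
            (∀ j, p ≤ q j ∧ q j < 1) ∧
            iIndepFun Geo ℙ ∧
            (∀ j (s : ℕ), (ℙ {ω | Geo j ω = s}).toReal = q j * (1 - q j) ^ s) ∧
            (∀ ω, Y v i ω = Finset.univ.sup (fun j => Geo j ω))) →
          ∀ k : ℝ, 0 ≤ k →
            (ℙ {ω | ∃ v : V,
                c * ((T : ℝ) * Real.log Δ + Real.log (Fintype.card V) + k) ≤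
                  (Finset.univ.filter
                      (fun f : Fin T → V => IsBlamingChain G T v f)).sup'
                    ⟨fun _ => v, Finset.mem_filter.mpr ⟨Finset.mem_univ _,
                      fun _ => rfl, fun _ _ => ⟨SimpleGraph.Walk.nil, by simp⟩⟩⟩
                    (fun f => ∑ i : Fin T, (Y (f i) i ω : ℝ))}).toReal ≤
              Real.exp (-k) := by
  obtain ⟨hp0, hp1⟩ := hp
  have hβ0 : (0:ℝ) ≤ 1 - p := by linarith
  have hβ1 : 1 - p < 1 := by linarith
  obtain ⟨D, hD4⟩ := exists_pow_lt_of_lt_one (by norm_num : (0:ℝ) < 1/4) hβ1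
  have hD0 : 0 < D := by
    rcases Nat.eq_zero_or_pos D with h | h
    · exfalso; rw [h, pow_zero] at hD4; linarith
    · exact h
  have hlog2 : (0:ℝ) < Real.log 2 := Real.log_pos (by norm_num)
  refine ⟨6 * D / Real.log 2, by positivity, ?_⟩
  intro V _ G _ Δ hΔ hn hdeg T hT Ω _ _ Y hYmeas hind hYgeom k hk
  set c : ℝ := 6 * D / Real.log 2 with hc
  set n := Fintype.card V with hndef
  set R : ℝ := (T : ℝ) * Real.log Δ + Real.log n + k with hR
  set s : ℝ := c * R with hs
  have hΔR : (2:ℝ) ≤ (Δ:ℝ) := by exact_mod_cast hΔ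
  have hnR : (2:ℝ) ≤ (n:ℝ) := by exact_mod_cast hn
  have hTR : (1:ℝ) ≤ (T:ℝ) := by exact_mod_cast hT
  have hlogΔ : Real.log 2 ≤ Real.log Δ := Real.log_le_log (by norm_num) hΔR
  have hlogn : Real.log 2 ≤ Real.log n := Real.log_le_log (by norm_num) hnR
  have hlogΔ0 : 0 < Real.log Δ := lt_of_lt_of_le hlog2 hlogΔ
  have hlogn0 : 0 < Real.log n := lt_of_lt_of_le hlog2 hlogn
  have hR0 : 0 ≤ R := by
    rw [hR]
    have : 0 ≤ (T:ℝ) * Real.log Δ := by positivity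
    linarith
  have hc0 : 0 < c := by rw [hc]; positivity
  have hs0 : 0 ≤ s := mul_nonneg hc0.le hR0
  set M : ℕ := ⌈s⌉₊ with hM
  set m : ℕ := M / D - T with hmdef
  set C : V → Finset (Fin T → V) :=
    fun v => Finset.univ.filter (fun f : Fin T → V => IsBlamingChain G T v f) with hC
  set A : V → (Fin T → V) → Set Ω := fun v f => {ω | M ≤ ∑ i, Y (f i) i ω} with hA
  -- event inclusion
  have hincl : {ω | ∃ v : V,
      s ≤ (C v).sup' ⟨fun _ => v, Finset.mem_filter.mpr ⟨Finset.mem_univ _,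
        fun _ => rfl, fun _ _ => ⟨SimpleGraph.Walk.nil, by simp⟩⟩⟩
        (fun f => ∑ i : Fin T, (Y (f i) i ω : ℝ))} ⊆
      ⋃ v ∈ (Finset.univ : Finset V), ⋃ f ∈ C v, A v f := by
    intro ω hω
    simp only [Set.mem_setOf_eq] at hω
    obtain ⟨v, hv⟩ := hω
    replace hv := (Finset.le_sup'_iff _).mp hv
    obtain ⟨f, hfC, hf⟩ := hv
    have hMle : M ≤ ∑ i, Y (f i) i ω := by
      rw [hM, Nat.ceil_le]
      push_cast
      exact hf
    exact Set.mem_biUnion (Finset.mem_univ v) (Set.mem_biUnion hfC hMle)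
  -- measure bound
  have hub : (ℙ {ω | ∃ v : V,
      s ≤ (C v).sup' ⟨fun _ => v, Finset.mem_filter.mpr ⟨Finset.mem_univ _,
        fun _ => rfl, fun _ _ => ⟨SimpleGraph.Walk.nil, by simp⟩⟩⟩
        (fun f => ∑ i : Fin T, (Y (f i) i ω : ℝ))}).toReal ≤
      ∑ v : V, ∑ f ∈ C v, (ℙ (A v f)).toReal := by
    have h1 : ℙ {ω | ∃ v : V,
        s ≤ (C v).sup' ⟨fun _ => v, Finset.mem_filter.mpr ⟨Finset.mem_univ _,
          fun _ => rfl, fun _ _ => ⟨SimpleGraph.Walk.nil, by simp⟩⟩⟩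
          (fun f => ∑ i : Fin T, (Y (f i) i ω : ℝ))} ≤
        ∑ v : V, ∑ f ∈ C v, ℙ (A v f) := by
      refine (measure_mono hincl).trans ?_
      refine (measure_biUnion_finset_le _ _).trans ?_
      exact Finset.sum_le_sum (fun v _ => measure_biUnion_finset_le _ _)
    have hfin : (∑ v : V, ∑ f ∈ C v, ℙ (A v f)) ≠ ⊤ := by
      refine (ENNReal.sum_lt_top.mpr (fun v _ => ?_)).ne
      exact ENNReal.sum_lt_top.mpr (fun f _ => measure_lt_top _ _)
    refine le_trans (ENNReal.toReal_mono hfin h1) (le_of_eq ?_)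
    rw [ENNReal.toReal_sum (fun v _ => (ENNReal.sum_lt_top.mpr
      (fun f _ => measure_lt_top _ _)).ne)]
    exact Finset.sum_congr rfl (fun v _ =>
      ENNReal.toReal_sum (fun f _ => measure_ne_top _ _))
  -- per-term bound
  have hterm : ∀ (v : V) (f : Fin T → V),
      (ℙ (A v f)).toReal ≤ (2*Δ:ℝ)^T * (1/2)^m := by
    intro v f
    exact chain_tail hp0 hp1 Δ (by omega) (by omega) Y hind hYgeom D hD0 hD4.le f M
  -- count bound
  have hcount : ∀ v : V, ((C v).card : ℝ) ≤ (2*(Δ:ℝ)^2)^(T-1) := by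
    intro v
    have := chain_count G Δ hΔ hdeg T hT v
    calc ((C v).card : ℝ) ≤ (((2*Δ^2)^(T-1) : ℕ) : ℝ) := by exact_mod_cast this
      _ = (2*(Δ:ℝ)^2)^(T-1) := by push_cast; ring
  -- combine
  have htotal : (ℙ {ω | ∃ v : V,
      s ≤ (C v).sup' ⟨fun _ => v, Finset.mem_filter.mpr ⟨Finset.mem_univ _,
        fun _ => rfl, fun _ _ => ⟨SimpleGraph.Walk.nil, by simp⟩⟩⟩
        (fun f => ∑ i : Fin T, (Y (f i) i ω : ℝ))}).toReal ≤
      (n:ℝ) * ((2*(Δ:ℝ)^2)^(T-1) * ((2*Δ:ℝ)^T * (1/2)^m)) := by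
    refine hub.trans ?_
    calc ∑ v : V, ∑ f ∈ C v, (ℙ (A v f)).toReal
        ≤ ∑ v : V, ∑ _f ∈ C v, (2*Δ:ℝ)^T * (1/2)^m :=
          Finset.sum_le_sum (fun v _ => Finset.sum_le_sum (fun f _ => hterm v f))
      _ = ∑ v : V, ((C v).card : ℝ) * ((2*Δ:ℝ)^T * (1/2)^m) := by
          exact Finset.sum_congr rfl (fun v _ => by rw [Finset.sum_const, nsmul_eq_mul])
      _ ≤ ∑ _v : V, (2*(Δ:ℝ)^2)^(T-1) * ((2*Δ:ℝ)^T * (1/2)^m) := by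
          refine Finset.sum_le_sum (fun v _ => ?_)
          exact mul_le_mul_of_nonneg_right (hcount v) (by positivity)
      _ = (n:ℝ) * ((2*(Δ:ℝ)^2)^(T-1) * ((2*Δ:ℝ)^T * (1/2)^m)) := by
          rw [Finset.sum_const, nsmul_eq_mul, Finset.card_univ]
  -- final numeric bound
  refine htotal.trans ?_
  -- lower bound on m
  have hDR : (0:ℝ) < (D:ℝ) := by exact_mod_cast hD0
  have hmR : s / D - 1 - T ≤ (m:ℝ) := by
    have h1 : s ≤ (M:ℝ) := Nat.le_ceil s
    have h2 : (M:ℝ) < D * ((M/D : ℕ):ℝ) + D := by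
      have hdm : (M:ℝ) = D * ((M/D : ℕ):ℝ) + ((M % D : ℕ):ℝ) := by
        exact_mod_cast (Nat.div_add_mod M D).symm
      have hmod : ((M % D : ℕ):ℝ) < (D:ℝ) := by exact_mod_cast Nat.mod_lt M hD0
      linarith
    have h3 : (M:ℝ)/D - 1 < ((M/D:ℕ):ℝ) := by
      rw [sub_lt_iff_lt_add, div_lt_iff₀ hDR]
      linarith [mul_comm ((M/D:ℕ):ℝ) (D:ℝ)]
    have h4 : ((M/D:ℕ):ℝ) - T ≤ (m:ℝ) := by
      rw [hmdef]
      rcases le_total T (M/D) with h | h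
      · rw [Nat.cast_sub h]
      · have : M/D - T = 0 := Nat.sub_eq_zero_of_le h
        rw [this]
        have : ((M/D:ℕ):ℝ) ≤ (T:ℝ) := by exact_mod_cast h
        simp; linarith
    have h5 : s / D ≤ (M:ℝ)/D := (div_le_div_iff_of_pos_right hDR).mpr h1
    linarith
  -- rewrite (1/2)^m as exponential
  have e1 : ((1:ℝ)/2)^m = Real.exp (-(m:ℝ) * Real.log 2) := by
    rw [← Real.exp_log (show (0:ℝ) < ((1:ℝ)/2)^m by positivity), Real.log_pow]
    congr 1
    rw [one_div, Real.log_inv]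
    push_cast
    ring
  have e2 : (n:ℝ) = Real.exp (Real.log n) := by
    rw [Real.exp_log]; exact_mod_cast (by omega : 0 < n)
  have e3 : (2*(Δ:ℝ)^2)^(T-1) = Real.exp ((T-1:ℕ) * Real.log (2*(Δ:ℝ)^2)) := by
    rw [← Real.log_pow, Real.exp_log (by positivity)]
  have e4 : (2*(Δ:ℝ))^T = Real.exp ((T:ℕ) * Real.log (2*(Δ:ℝ))) := by
    rw [← Real.log_pow, Real.exp_log (by positivity)]
  rw [e1, e2, e3, e4, ← Real.exp_add, ← Real.exp_add, ← Real.exp_add]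
  rw [Real.exp_le_exp]
  -- now a pure inequality of logarithms
  have hsD : s / D * Real.log 2 = 6 * R := by
    rw [hs, hc]
    field_simp
  have hlog2Δ2 : Real.log (2*(Δ:ℝ)^2) = Real.log 2 + 2 * Real.log Δ := by
    rw [Real.log_mul (by norm_num) (by positivity), Real.log_pow]
    norm_num
  have hlog2Δ : Real.log (2*(Δ:ℝ)) = Real.log 2 + Real.log Δ := by
    rw [Real.log_mul (by norm_num) (by positivity)]
  have hT1 : ((T-1:ℕ):ℝ) ≤ (T:ℝ) := by
    have : T - 1 ≤ T := Nat.sub_le T 1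
    exact_mod_cast this
  have hb1 : ((T-1:ℕ):ℝ) * Real.log (2*(Δ:ℝ)^2) ≤ (T:ℝ) * (Real.log 2 + 2 * Real.log Δ) := by
    rw [hlog2Δ2]
    exact mul_le_mul_of_nonneg_right hT1 (by positivity)
  have hb2 : -(m:ℝ) * Real.log 2 ≤ -(s/D - 1 - T) * Real.log 2 := by
    have := mul_le_mul_of_nonneg_right hmR hlog2.le
    nlinarith
  have hexpand : -(s/D - 1 - T) * Real.log 2 = -(6*R) + (1 + T) * Real.log 2 := by
    have : -(s/D - 1 - T) * Real.log 2
        = -(s/D * Real.log 2) + (1 + T) * Real.log 2 := by ring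
    rw [this, hsD]
  have hRk : 6 * R = 6 * (T:ℝ) * Real.log Δ + 6 * Real.log n + 6 * k := by
    rw [hR]; ring
  have hbB : ((T:ℕ):ℝ) * Real.log (2*(Δ:ℝ)) = (T:ℝ)*Real.log 2 + (T:ℝ)*Real.log Δ := by
    rw [hlog2Δ]; ring
  have hb2' : -(m:ℝ) * Real.log 2 ≤ -(6*R) + (1+T)*Real.log 2 := hb2.trans_eq hexpand
  have hTlog : (T:ℝ) * Real.log 2 ≤ (T:ℝ) * Real.log Δ :=
    mul_le_mul_of_nonneg_left hlogΔ (by linarith)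
  rw [hRk] at hb2'
  linarith [hb1, hTlog, hlogn, hlogn0.le, hk]
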